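/- Fix ξ ∈ ℝ, let α = ξ and ν = ξ², and let u be an (α,ξ,ν)-eigenfunction (so in particular u'(0) = 0). Define k₀(t) := ( −ξ/2 + (2/3)(ξ−t) ) u(t) + ( (2/3)(1−ξ²) + ξ(ξ−t) − (1/3)(ξ−t)² ) u'(t). Then k₀ satisfies the pointwise identity −k₀''(t) + ((ξ−t)² + 1 − ξ²)k₀(t) = −(C_ξ u)(t) for all t ≥ 0, and the Neumann condition k₀'(0) = 0. -/

import Mathlib

open MeasureTheory

/-- An `(α,ξ,ν)`-eigenfunction: a smooth function on `ℝ` which, together with all its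
derivatives, decays faster than any polynomial on `[0,∞)`, solves
`−u'' + ((ξ−t)² + 1)u = νu` on `[0,∞)`, and satisfies the Robin condition
`u'(0) = (α−ξ)u(0)`. -/
def IsEigen (α ξ ν : ℝ) (u : ℝ → ℝ) : Prop :=
  ContDiff ℝ (⊤ : ℕ∞) u ∧
  (∀ n k : ℕ, ∃ C : ℝ, ∀ t : ℝ, 0 ≤ t → |t| ^ k * |iteratedDeriv n u t| ≤ C) ∧
  (∀ t : ℝ, 0 ≤ t → -(deriv (deriv u) t) + ((ξ - t) ^ 2 + 1) * u t = ν * u t) ∧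
  deriv u 0 = (α - ξ) * u 0

/-- The operator `C_ξ w = 2( t·(n₀w) − ξw − w' + t²(ξ−t)w )`, where
`(n₀w)(t) = −w''(t) + ((ξ−t)² + 1)w(t)`. -/
noncomputable def Cxi (ξ : ℝ) (w : ℝ → ℝ) (t : ℝ) : ℝ :=
  2 * (t * (-(deriv (deriv w) t) + ((ξ - t) ^ 2 + 1) * w t)
    - ξ * w t - deriv w t + t ^ 2 * (ξ - t) * w t)

/-- The explicit corrector
`k₀ = (−ξ/2 + (2/3)(ξ−t))u + ((2/3)(1−ξ²) + ξ(ξ−t) − (1/3)(ξ−t)²)u'`. -/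
noncomputable def kzero (ξ : ℝ) (u : ℝ → ℝ) (t : ℝ) : ℝ :=
  (-ξ / 2 + 2 / 3 * (ξ - t)) * u t
    + (2 / 3 * (1 - ξ ^ 2) + ξ * (ξ - t) - 1 / 3 * (ξ - t) ^ 2) * deriv u t

/-- For a `(ξ,ξ,ξ²)`-eigenfunction `u`, the function `k₀` solves
`−k₀'' + ((ξ−t)² + 1 − ξ²)k₀ = −C_ξ u` on `[0,∞)` and the Neumann condition `k₀'(0) = 0`. -/
theorem kzero_equation
    (ξ : ℝ) (u : ℝ → ℝ) (hu : IsEigen ξ ξ (ξ ^ 2) u) :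
    (∀ t : ℝ, 0 ≤ t →
        -(deriv (deriv (kzero ξ u)) t) + ((ξ - t) ^ 2 + 1 - ξ ^ 2) * kzero ξ u t
          = -(Cxi ξ u t)) ∧
    deriv (kzero ξ u) 0 = 0 := by
  obtain ⟨hsm, -, hode, hrob⟩ := hu
  -- smoothness of the derivatives
  have h1 : ContDiff ℝ (⊤ : ℕ∞) (deriv u) := (contDiff_infty_iff_deriv.mp hsm).2
  have h2 : ContDiff ℝ (⊤ : ℕ∞) (deriv (deriv u)) := (contDiff_infty_iff_deriv.mp h1).2
  have hd0 : Differentiable ℝ u := hsm.differentiable (by simp)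
  have hd1 : Differentiable ℝ (deriv u) := h1.differentiable (by simp)
  have hd2 : Differentiable ℝ (deriv (deriv u)) := h2.differentiable (by simp)
  have hU : ∀ t : ℝ, HasDerivAt u (deriv u t) t := fun t => (hd0 t).hasDerivAt
  have hU1 : ∀ t : ℝ, HasDerivAt (deriv u) (deriv (deriv u) t) t :=
    fun t => (hd1 t).hasDerivAt
  have hU2 : ∀ t : ℝ, HasDerivAt (deriv (deriv u)) (deriv (deriv (deriv u)) t) t :=
    fun t => (hd2 t).hasDerivAt
  -- the second-order ODE on `[0,∞)`
  have hODE : ∀ t : ℝ, 0 ≤ t →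
      deriv (deriv u) t = ((ξ - t) ^ 2 + 1 - ξ ^ 2) * u t := by
    intro t ht
    have := hode t ht
    nlinarith [this]
  -- derivative of `ξ - s` and friends
  have hsub : ∀ t : ℝ, HasDerivAt (fun s : ℝ => ξ - s) (-1) t :=
    fun t => (hasDerivAt_id t).const_sub ξ
  -- the function `f s = (ξ-s)^2 + 1 - ξ^2`
  have hf : ∀ t : ℝ, HasDerivAt (fun s : ℝ => (ξ - s) ^ 2 + 1 - ξ ^ 2)
      (-(2 * (ξ - t))) t := by
    intro t
    have := (((hsub t).pow 2).add_const 1).sub_const (ξ ^ 2)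
    exact this.congr_deriv (by ring)
  -- the third derivative on `[0,∞)`
  have hODE' : ∀ t : ℝ, 0 ≤ t →
      deriv (deriv (deriv u)) t
        = -(2 * (ξ - t)) * u t + ((ξ - t) ^ 2 + 1 - ξ ^ 2) * deriv u t := by
    intro t ht
    set g : ℝ → ℝ :=
      fun s => deriv (deriv u) s - ((ξ - s) ^ 2 + 1 - ξ ^ 2) * u s with hg
    have hgd : ∀ s : ℝ, HasDerivAt g
        (deriv (deriv (deriv u)) s
          - (-(2 * (ξ - s)) * u s + ((ξ - s) ^ 2 + 1 - ξ ^ 2) * deriv u s)) s := by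
      intro s
      exact (hU2 s).sub ((hf s).mul (hU s))
    have hg0 : ∀ s ∈ Set.Ici (0 : ℝ), g s = 0 := by
      intro s hs
      have := hODE s hs
      simp [hg, this]
    -- derivative of g within Ici 0 is 0, and equals the full derivative
    have hdw : derivWithin g (Set.Ici (0 : ℝ)) t = 0 := by
      have : derivWithin g (Set.Ici (0 : ℝ)) t
          = derivWithin (fun _ : ℝ => (0 : ℝ)) (Set.Ici (0 : ℝ)) t := by
        apply derivWithin_congr hg0 (hg0 t ht)
      rw [this, derivWithin_fun_const]
      rfl
    have huniq : UniqueDiffWithinAt ℝ (Set.Ici (0 : ℝ)) t :=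
      uniqueDiffOn_Ici 0 t ht
    have hgdiff : DifferentiableAt ℝ g t := (hgd t).differentiableAt
    have : deriv g t = 0 := by
      rw [← hgdiff.derivWithin huniq, hdw]
    have h := (hgd t).deriv
    rw [this] at h
    linarith [h]
  -- first derivative of kzero, everywhere
  have hp : ∀ t : ℝ, HasDerivAt (fun s : ℝ => -ξ / 2 + 2 / 3 * (ξ - s)) (-(2 / 3)) t := by
    intro t
    have := ((hsub t).const_mul (2 / 3)).const_add (-ξ / 2)
    exact this.congr_deriv (by ring)
  have hq : ∀ t : ℝ, HasDerivAt
      (fun s : ℝ => 2 / 3 * (1 - ξ ^ 2) + ξ * (ξ - s) - 1 / 3 * (ξ - s) ^ 2)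
      (-ξ + 2 / 3 * (ξ - t)) t := by
    intro t
    have := (((hsub t).const_mul ξ).const_add (2 / 3 * (1 - ξ ^ 2))).sub
      (((hsub t).pow 2).const_mul (1 / 3))
    exact this.congr_deriv (by ring)
  have hk1 : ∀ t : ℝ, HasDerivAt (kzero ξ u)
      ((-(2 / 3) * u t + (-ξ / 2 + 2 / 3 * (ξ - t)) * deriv u t)
        + ((-ξ + 2 / 3 * (ξ - t)) * deriv u t
          + (2 / 3 * (1 - ξ ^ 2) + ξ * (ξ - t) - 1 / 3 * (ξ - t) ^ 2)
            * deriv (deriv u) t)) t := by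
    intro t
    exact ((hp t).mul (hU t)).add ((hq t).mul (hU1 t))
  have hderiv1 : deriv (kzero ξ u)
      = fun t => (-(2 / 3) * u t + (-ξ / 2 + 2 / 3 * (ξ - t)) * deriv u t)
        + ((-ξ + 2 / 3 * (ξ - t)) * deriv u t
          + (2 / 3 * (1 - ξ ^ 2) + ξ * (ξ - t) - 1 / 3 * (ξ - t) ^ 2)
            * deriv (deriv u) t) := by
    funext t
    exact (hk1 t).deriv
  -- second derivative of kzero, everywhere
  have hk2 : ∀ t : ℝ, HasDerivAt (deriv (kzero ξ u))
      ((-(2 / 3) * deriv u t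
          + (-(2 / 3) * deriv u t + (-ξ / 2 + 2 / 3 * (ξ - t)) * deriv (deriv u) t))
        + ((-(2 / 3) * deriv u t + (-ξ + 2 / 3 * (ξ - t)) * deriv (deriv u) t)
          + ((-ξ + 2 / 3 * (ξ - t)) * deriv (deriv u) t
            + (2 / 3 * (1 - ξ ^ 2) + ξ * (ξ - t) - 1 / 3 * (ξ - t) ^ 2)
              * deriv (deriv (deriv u)) t))) t := by
    intro t
    rw [hderiv1]
    have ha : HasDerivAt (fun s : ℝ => -(2 / 3) * u s)
        (-(2 / 3) * deriv u t) t := (hU t).const_mul (-(2 / 3))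
    have hb : HasDerivAt (fun s : ℝ => (-ξ / 2 + 2 / 3 * (ξ - s)) * deriv u s)
        (-(2 / 3) * deriv u t + (-ξ / 2 + 2 / 3 * (ξ - t)) * deriv (deriv u) t) t :=
      (hp t).mul (hU1 t)
    have hc : HasDerivAt (fun s : ℝ => (-ξ + 2 / 3 * (ξ - s)) * deriv u s)
        (-(2 / 3) * deriv u t + (-ξ + 2 / 3 * (ξ - t)) * deriv (deriv u) t) t := by
      have hq' : HasDerivAt (fun s : ℝ => -ξ + 2 / 3 * (ξ - s)) (-(2 / 3)) t := by
        have := ((hsub t).const_mul (2 / 3)).const_add (-ξ)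
        exact this.congr_deriv (by ring)
      exact hq'.mul (hU1 t)
    have he : HasDerivAt
        (fun s : ℝ => (2 / 3 * (1 - ξ ^ 2) + ξ * (ξ - s) - 1 / 3 * (ξ - s) ^ 2)
          * deriv (deriv u) s)
        ((-ξ + 2 / 3 * (ξ - t)) * deriv (deriv u) t
          + (2 / 3 * (1 - ξ ^ 2) + ξ * (ξ - t) - 1 / 3 * (ξ - t) ^ 2)
            * deriv (deriv (deriv u)) t) t := (hq t).mul (hU2 t)
    exact (ha.add hb).add (hc.add he)
  constructor
  · intro t ht
    rw [(hk2 t).deriv]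
    rw [hODE' t ht, hODE t ht]
    simp only [kzero, Cxi, hODE t ht]
    ring
  · rw [hderiv1]
    simp only
    rw [hODE 0 le_rfl, hrob]
    ring
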